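/- (Protasov–Saryev criterion, 'easy' direction) Let G be a topological group such that for every subset A ⊆ G and every neighbourhood V of the identity there exists a neighbourhood U of the identity with UA ⊆ AV. Then every bounded right uniformly continuous real-valued function on G is left uniformly continuous. -/

import Mathlib

open scoped Pointwise

theorem protasov_saryev_easy
    {G : Type*} [Group G] [TopologicalSpace G] [IsTopologicalGroup G]
    (h : ∀ A : Set G, ∀ V ∈ nhds (1 : G), ∃ U ∈ nhds (1 : G), U * A ⊆ A * V)
    (f : G → ℝ) (hb : ∃ C : ℝ, ∀ x : G, |f x| ≤ C)
    (hruc : ∀ ε > (0 : ℝ), ∃ V ∈ nhds (1 : G),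
      ∀ x y : G, x * y⁻¹ ∈ V → |f x - f y| < ε) :
    ∀ ε > (0 : ℝ), ∃ V ∈ nhds (1 : G),
      ∀ x y : G, x⁻¹ * y ∈ V → |f x - f y| < ε := by
  obtain ⟨C, hC⟩ := hb
  have hC0 : (0:ℝ) ≤ C := le_trans (abs_nonneg _) (hC 1)
  intro ε hε
  obtain ⟨W, hW, hWf⟩ := hruc (ε/4) (by positivity)
  -- For every level t, get a neighbourhood U t controlling right translates of
  -- the level set {x | t < f x}.
  have key : ∀ t : ℝ, ∃ U ∈ nhds (1 : G), ∀ x : G, t < f x → ∀ u ∈ U,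
      ∃ a : G, t < f a ∧ (x * u) * a⁻¹ ∈ W := by
    intro t
    obtain ⟨U₀, hU₀, hsub⟩ := h ({x : G | t < f x})⁻¹ W⁻¹ (inv_mem_nhds_one G hW)
    refine ⟨U₀⁻¹, inv_mem_nhds_one G hU₀, ?_⟩
    intro x hx u hu
    have hmem : u⁻¹ * x⁻¹ ∈ U₀ * ({x : G | t < f x})⁻¹ := by
      refine Set.mul_mem_mul ?_ ?_
      · exact Set.mem_inv.mp hu
      · simpa [Set.mem_inv] using hx
    obtain ⟨b, hb, v, hv, hbv⟩ := hsub hmem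
    refine ⟨b⁻¹, by simpa [Set.mem_inv] using hb, ?_⟩
    have hbv' : b * v = u⁻¹ * x⁻¹ := hbv
    have hxu : (x * u) * b = v⁻¹ := by
      have : (x * u)⁻¹ = b * v := by rw [hbv']; group
      have h2 : x * u = v⁻¹ * b⁻¹ := by
        rw [← inv_inv (x*u), this]; group
      rw [h2]; group
    have : (x * u) * b⁻¹⁻¹ = v⁻¹ := by simpa using hxu
    rw [this]
    exact Set.inv_mem_inv.mp (by simpa using hv)
  choose U hU hUspec using key
  set n : ℕ := ⌈16*C/ε⌉₊ + 3 with hn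
  set t : ℕ → ℝ := fun k => -C + k * (ε/8) with ht
  set V₀ : Set G := ⋂ k ∈ Finset.range (n+1), U (t k) with hV₀
  have hV₀mem : V₀ ∈ nhds (1:G) :=
    (Filter.biInter_finset_mem (Finset.range (n+1))).mpr fun k _ => hU (t k)
  set V : Set G := V₀ ∩ V₀⁻¹ with hVdef
  have hVmem : V ∈ nhds (1:G) := Filter.inter_mem hV₀mem (inv_mem_nhds_one G hV₀mem)
  -- one-sided estimate
  have claim : ∀ x y : G, x⁻¹ * y ∈ V → f x - f y ≤ ε/2 := by
    intro x y hxy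
    by_contra hcon
    push_neg at hcon
    have hfx : f y + ε/2 < f x := by linarith
    set s : ℝ := (f y + ε/4 + C)/(ε/8) with hs
    set k : ℕ := ⌊s⌋₊ + 1 with hk
    have hs0 : 0 ≤ s := by
      have : -C ≤ f y := by have := hC y; rw [abs_le] at this; linarith
      apply div_nonneg (by linarith) (by positivity)
    have hks : s < k := by exact_mod_cast Nat.lt_floor_add_one s
    have hks' : (k:ℝ) ≤ s + 1 := by
      have := Nat.floor_le hs0
      push_cast [hk]; linarith
    have htk1 : f y + ε/4 < t k := by
      have : s * (ε/8) < (k:ℝ) * (ε/8) :=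
        mul_lt_mul_of_pos_right hks (by positivity)
      have hse : s * (ε/8) = f y + ε/4 + C := by
        rw [hs]; field_simp
      rw [ht]; dsimp only; linarith
    have htk2 : t k < f x := by
      have : (k:ℝ) * (ε/8) ≤ (s+1) * (ε/8) :=
        mul_le_mul_of_nonneg_right hks' (by positivity)
      have hse : s * (ε/8) = f y + ε/4 + C := by
        rw [hs]; field_simp
      rw [ht]; dsimp only; nlinarith
    have hkn : k ≤ n := by
      have h1 : s ≤ 16*C/ε + 2 := by
        rw [hs]
        rw [div_le_iff₀ (by positivity : (0:ℝ) < ε/8)]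
        have : f y ≤ C := by have := hC y; rw [abs_le] at this; linarith
        have hCe : (16*C/ε + 2) * (ε/8) = 2*C + ε/4 := by field_simp; ring
        rw [hCe]; linarith
      have h2 : (k:ℝ) ≤ (n:ℝ) := by
        have h3 : (16*C/ε : ℝ) ≤ (⌈16*C/ε⌉₊ : ℝ) := Nat.le_ceil _
        have : (n:ℝ) = (⌈16*C/ε⌉₊ : ℝ) + 3 := by rw [hn]; push_cast; ring
        rw [this]; linarith
      exact_mod_cast h2
    -- u = x⁻¹ * y lies in U (t k)
    have huU : x⁻¹ * y ∈ U (t k) := by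
      have hsub : V ⊆ U (t k) := by
        intro z hz
        have hz0 : z ∈ V₀ := hz.1
        rw [hV₀] at hz0
        exact Set.mem_iInter₂.mp hz0 k (Finset.mem_range.mpr (Nat.lt_succ_of_le hkn))
      exact hsub hxy
    obtain ⟨a, hta, haW⟩ := hUspec (t k) x htk2 (x⁻¹*y) huU
    have hya : y * a⁻¹ ∈ W := by
      have : x * (x⁻¹ * y) = y := by group
      rwa [this] at haW
    have := hWf y a hya
    rw [abs_sub_lt_iff] at this
    obtain ⟨h1', h2'⟩ := this
    have hcontra : f y + ε/4 < f y + ε/4 := by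
      calc f y + ε/4 < t k := htk1
        _ < f a := hta
        _ < f y + ε/4 := by linarith
    exact absurd hcontra (lt_irrefl _)
  refine ⟨V, hVmem, ?_⟩
  intro x y hxy
  have hxy' : y⁻¹ * x ∈ V := by
    have h1 : (x⁻¹ * y)⁻¹ ∈ V₀ := Set.mem_inv.mp hxy.2
    have h2 : (x⁻¹ * y)⁻¹ ∈ V₀⁻¹ := by
      rw [Set.mem_inv, inv_inv]; exact hxy.1
    have heq : y⁻¹ * x = (x⁻¹ * y)⁻¹ := by group
    rw [heq]; exact ⟨h1, h2⟩
  have h1 := claim x y hxy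
  have h2 := claim y x hxy'
  have : |f x - f y| ≤ ε/2 := abs_sub_le_iff.mpr ⟨h1, h2⟩
  linarith
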